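/- For a metric space (X, d) with d ≤ 1, the canonical inclusion of X into its free Banach space B(X) (sending x to the basis vector 1·x) is an isometric embedding: ‖1·x − 1·y‖ = d(x, y) for all x, y ∈ X. -/
import Mathlib


noncomputable section

noncomputable section

/-- The metric on `X ⊔ {*}` (with `none` playing the role of the basepoint `*`),
where the new point `*` is at distance `1` from every point of `X`. -/
def optDist (X : Type) [MetricSpace X] : Option X → Option X → ℝ
  | some x, some y => dist x y
  | none, none => 0
  | _, _ => 1

/-- The candidate norm on the free real vector space `L(X)` with Hamel basis `X ⊔ {*}`
(realized as finitely supported functions `Option X →₀ ℝ`): the infimum of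
`∑ᵢ |λᵢ| d(xᵢ, yᵢ)` over all representations `∑ᵢ λᵢ xᵢ = w` with
`∑ᵢ λᵢ yᵢ ∈ Span{*}`. -/
def freeNorm (X : Type) [MetricSpace X] (w : Option X →₀ ℝ) : ℝ :=
  sInf { r : ℝ | ∃ (n : ℕ) (lam : Fin n → ℝ) (a b : Fin n → Option X),
    (∑ i, lam i • Finsupp.single (a i) (1 : ℝ)) = w ∧
    (∃ c : ℝ, (∑ i, lam i • Finsupp.single (b i) (1 : ℝ)) =
        c • Finsupp.single (none : Option X) (1 : ℝ)) ∧
    r = ∑ i, |lam i| * optDist X (a i) (b i) }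

lemma optDist_nonneg (X : Type) [MetricSpace X] (u v : Option X) :
    0 ≤ optDist X u v := by
  match u, v with
  | some a, some b => exact dist_nonneg
  | none, none => exact le_refl 0
  | some a, none => exact zero_le_one
  | none, some b => exact zero_le_one

/-- the canonical inclusion of `X` into its free Banach space `B(X)`
(sending `x` to the basis vector `1·x`) is an isometric embedding:
`‖1·x − 1·y‖ = d(x, y)` for all `x, y ∈ X`. (Since `L(X)` embeds isometrically in
its completion `B(X)`, this is equivalently stated via the norm of `L(X)`.) -/
theorem freeSpace_inclusion_isometry (X : Type) [MetricSpace X]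
    (hd : ∀ x y : X, dist x y ≤ 1) (x y : X) :
    freeNorm X (Finsupp.single (some x) (1 : ℝ) - Finsupp.single (some y) (1 : ℝ)) =
      dist x y := by
  classical
  set g : Option X → ℝ := fun u => u.elim 0 (fun z => dist z y) with hgdef
  have hgl : ∀ u v : Option X, |g u - g v| ≤ optDist X u v := by
    intro u v
    match u, v with
    | some a, some b => simpa [g, optDist] using abs_dist_sub_le a b y
    | some a, none =>
      simp only [g, optDist, Option.elim, sub_zero]
      rw [abs_of_nonneg dist_nonneg]; exact hd a y
    | none, some b =>
      simp only [g, optDist, Option.elim, zero_sub, abs_neg]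
      rw [abs_of_nonneg dist_nonneg]; exact hd b y
    | none, none => simp [g, optDist]
  set φ : (Option X →₀ ℝ) →ₗ[ℝ] ℝ := Finsupp.linearCombination ℝ g with hφdef
  have hφ : ∀ (u : Option X) (t : ℝ), φ (t • Finsupp.single u 1) = t * g u := by
    intro u t
    simp [φ, Finsupp.linearCombination_single, smul_eq_mul]
  -- the witness representation
  have hmem : dist x y ∈ { r : ℝ | ∃ (n : ℕ) (lam : Fin n → ℝ) (a b : Fin n → Option X),
      (∑ i, lam i • Finsupp.single (a i) (1 : ℝ)) =
        Finsupp.single (some x) (1 : ℝ) - Finsupp.single (some y) (1 : ℝ) ∧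
      (∃ c : ℝ, (∑ i, lam i • Finsupp.single (b i) (1 : ℝ)) =
          c • Finsupp.single (none : Option X) (1 : ℝ)) ∧
      r = ∑ i, |lam i| * optDist X (a i) (b i) } := by
    refine ⟨2, ![1, -1], ![some x, some y], ![some x, some x], ?_, ⟨0, ?_⟩, ?_⟩
    · simp [Fin.sum_univ_two, sub_eq_add_neg]
    · simp [Fin.sum_univ_two]
    · simp [Fin.sum_univ_two, optDist, dist_comm y x]
  have hlb : ∀ r ∈ { r : ℝ | ∃ (n : ℕ) (lam : Fin n → ℝ) (a b : Fin n → Option X),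
      (∑ i, lam i • Finsupp.single (a i) (1 : ℝ)) =
        Finsupp.single (some x) (1 : ℝ) - Finsupp.single (some y) (1 : ℝ) ∧
      (∃ c : ℝ, (∑ i, lam i • Finsupp.single (b i) (1 : ℝ)) =
          c • Finsupp.single (none : Option X) (1 : ℝ)) ∧
      r = ∑ i, |lam i| * optDist X (a i) (b i) }, dist x y ≤ r := by
    rintro r ⟨n, lam, a, b, ha, ⟨c, hb⟩, rfl⟩
    have h1 : ∑ i, lam i * g (a i) = dist x y := by
      have := congrArg φ ha
      rw [map_sum, map_sub] at this
      simp only [hφ] at this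
      have h1x : φ (Finsupp.single (some x) (1:ℝ)) = dist x y := by
        simpa [g, dist_comm] using hφ (some x) 1
      have h1y : φ (Finsupp.single (some y) (1:ℝ)) = 0 := by
        simpa [g] using hφ (some y) 1
      rw [h1x, h1y, sub_zero] at this
      simpa [dist_comm] using this
    have h2 : ∑ i, lam i * g (b i) = 0 := by
      have := congrArg φ hb
      rw [map_sum] at this
      simp only [hφ] at this
      simpa [g] using this
    have key : dist x y = ∑ i, lam i * (g (a i) - g (b i)) := by
      simp only [mul_sub, Finset.sum_sub_distrib, h1, h2, sub_zero]
    calc dist x y = |∑ i, lam i * (g (a i) - g (b i))| := by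
            rw [← key, abs_of_nonneg dist_nonneg]
      _ ≤ ∑ i, |lam i * (g (a i) - g (b i))| := Finset.abs_sum_le_sum_abs _ _
      _ ≤ ∑ i, |lam i| * optDist X (a i) (b i) := by
            refine Finset.sum_le_sum fun i _ => ?_
            rw [abs_mul]
            exact mul_le_mul_of_nonneg_left (hgl _ _) (abs_nonneg _)
  refine le_antisymm (csInf_le ?_ hmem) (le_csInf ⟨_, hmem⟩ hlb)
  refine ⟨0, ?_⟩
  rintro r ⟨n, lam, a, b, -, -, rfl⟩
  exact Finset.sum_nonneg fun i _ => mul_nonneg (abs_nonneg _) (optDist_nonneg X _ _)
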